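/- Let R be an associative ring with unity and let n ∈ ℕ. If A and B are n×n upper unitriangular matrices over R (all diagonal entries 1, all subdiagonal entries 0) whose first-superdiagonal entries are all equal to 1 (i.e. A_{i,i+1} = B_{i,i+1} = 1 for all i), then A and B are conjugate in UT_n(R): there exists X ∈ UT_n(R) with X A X^{-1} = B. -/

import Mathlib

namespace Stmt8Aux

variable {R : Type*} [Ring R] {n : ℕ}

/-- strictly upper triangular -/
def SU (M : Matrix (Fin n) (Fin n) R) : Prop := ∀ i j : Fin n, j ≤ i → M i j = 0

lemma su_pow_vanish {M : Matrix (Fin n) (Fin n) R} (hM : SU M) :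
    ∀ (k : ℕ) (i j : Fin n), (j : ℕ) < (i : ℕ) + k → (M ^ k) i j = 0 := by
  intro k
  induction k with
  | zero =>
    intro i j h
    rw [pow_zero]
    exact Matrix.one_apply_ne (by intro e; subst e; omega)
  | succ k ih =>
    intro i j h
    rw [pow_succ, Matrix.mul_apply]
    apply Finset.sum_eq_zero
    intro l _
    by_cases hl : (l : ℕ) < (i : ℕ) + k
    · rw [ih i l hl, zero_mul]
    · have hle : j ≤ l := by rw [Fin.le_def]; omega
      rw [hM l j hle, mul_zero]

lemma su_pow_superdiag {M : Matrix (Fin n) (Fin n) R} (hM : SU M)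
    (hs : ∀ (i : Fin n) (h : (i : ℕ) + 1 < n), M i ⟨(i : ℕ) + 1, h⟩ = 1) :
    ∀ (k : ℕ) (i : Fin n) (h : (i : ℕ) + k < n), (M ^ k) i ⟨(i : ℕ) + k, h⟩ = 1 := by
  intro k
  induction k with
  | zero =>
    intro i h
    have he : (⟨(i : ℕ) + 0, h⟩ : Fin n) = i := by ext; simp
    rw [pow_zero, he, Matrix.one_apply_eq]
  | succ k ih =>
    intro i h
    have hk : (i : ℕ) + k < n := by omega
    rw [pow_succ, Matrix.mul_apply]
    rw [Finset.sum_eq_single (⟨(i : ℕ) + k, hk⟩ : Fin n)]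
    · rw [ih i hk, one_mul]
      have h1 : ((⟨(i : ℕ) + k, hk⟩ : Fin n) : ℕ) + 1 < n := by show (i : ℕ) + k + 1 < n; omega
      have he : (⟨(i : ℕ) + (k + 1), h⟩ : Fin n)
          = ⟨((⟨(i : ℕ) + k, hk⟩ : Fin n) : ℕ) + 1, h1⟩ := by
        apply Fin.ext
        simp [Nat.add_assoc]
      rw [he]
      exact hs ⟨(i : ℕ) + k, hk⟩ h1
    · intro l _ hl
      by_cases hlo : (l : ℕ) < (i : ℕ) + k
      · rw [su_pow_vanish hM k i l hlo, zero_mul]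
      · have hne : (l : ℕ) ≠ (i : ℕ) + k := fun e => hl (Fin.ext e)
        have hle : (⟨(i : ℕ) + (k + 1), h⟩ : Fin n) ≤ l := by rw [Fin.le_def]; simp; omega
        rw [hM l _ hle, mul_zero]
    · intro habs; exact absurd (Finset.mem_univ _) habs

lemma exists_unit {X : Matrix (Fin n) (Fin n) R}
    (hd : ∀ i, X i i = 1) (hl : ∀ i j, j < i → X i j = 0) :
    ∃ u : (Matrix (Fin n) (Fin n) R)ˣ, u.val = X ∧
      (∀ i, (u⁻¹).val i i = 1) ∧
      (∀ i j, j < i → (u⁻¹).val i j = 0) := by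
  have hNsu : SU ((1 : Matrix (Fin n) (Fin n) R) - X) := by
    intro i j hji
    rw [Matrix.sub_apply]
    rcases eq_or_lt_of_le hji with he | hlt
    · rw [he, Matrix.one_apply_eq, hd, sub_self]
    · rw [hl i j hlt, Matrix.one_apply_ne (Fin.ne_of_gt hlt), sub_zero]
  have hNn : ((1 : Matrix (Fin n) (Fin n) R) - X) ^ n = 0 := by
    ext i j
    have := su_pow_vanish hNsu n i j (by omega)
    simpa using this
  have hXneg : X = -(((1 : Matrix (Fin n) (Fin n) R) - X) - 1) := by abel
  have h1 : X * (∑ k ∈ Finset.range n, ((1 : Matrix (Fin n) (Fin n) R) - X) ^ k) = 1 := by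
    nth_rewrite 1 [hXneg]
    rw [neg_mul, mul_geom_sum, hNn, zero_sub, neg_neg]
  have h2 : (∑ k ∈ Finset.range n, ((1 : Matrix (Fin n) (Fin n) R) - X) ^ k) * X = 1 := by
    nth_rewrite 2 [hXneg]
    rw [mul_neg, geom_sum_mul, hNn, zero_sub, neg_neg]
  refine ⟨⟨X, _, h1, h2⟩, rfl, ?_, ?_⟩
  · intro i
    show (∑ k ∈ Finset.range n, ((1 : Matrix (Fin n) (Fin n) R) - X) ^ k) i i = 1
    rw [Matrix.sum_apply]
    rw [Finset.sum_eq_single 0]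
    · simp
    · intro k _ hk
      exact su_pow_vanish hNsu k i i (by omega)
    · intro habs
      exact absurd (Finset.mem_range.mpr i.pos) habs
  · intro i j hji
    show (∑ k ∈ Finset.range n, ((1 : Matrix (Fin n) (Fin n) R) - X) ^ k) i j = 0
    rw [Matrix.sum_apply]
    apply Finset.sum_eq_zero
    intro k _
    exact su_pow_vanish hNsu k i j (by omega)

/-- the Jordan-block-like matrix -/
def Jmat (n : ℕ) (R : Type*) [Ring R] : Matrix (Fin n) (Fin n) R :=
  Matrix.of fun i j => (if (i : ℕ) = (j : ℕ) then 1 else 0) + (if (i : ℕ) + 1 = (j : ℕ) then 1 else 0)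

/-- the conjugating matrix -/
def Xmat (h0 : 0 < n) (M : Matrix (Fin n) (Fin n) R) : Matrix (Fin n) (Fin n) R :=
  Matrix.of fun i j => (M ^ (i : ℕ)) ⟨0, h0⟩ j

lemma Xmat_diag (h0 : 0 < n) {M : Matrix (Fin n) (Fin n) R} (hM : SU M)
    (hs : ∀ (i : Fin n) (h : (i : ℕ) + 1 < n), M i ⟨(i : ℕ) + 1, h⟩ = 1) (i : Fin n) :
    Xmat h0 M i i = 1 := by
  have := su_pow_superdiag hM hs (i : ℕ) ⟨0, h0⟩ (by simpa using i.isLt)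
  simpa [Xmat, Fin.ext_iff] using this

lemma Xmat_low (h0 : 0 < n) {M : Matrix (Fin n) (Fin n) R} (hM : SU M)
    (i j : Fin n) (hji : j < i) : Xmat h0 M i j = 0 := by
  have := su_pow_vanish hM (i : ℕ) ⟨0, h0⟩ j (by simpa using hji)
  simpa [Xmat] using this

lemma key (h0 : 0 < n) {M : Matrix (Fin n) (Fin n) R} (hM : SU M)
    (hs : ∀ (i : Fin n) (h : (i : ℕ) + 1 < n), M i ⟨(i : ℕ) + 1, h⟩ = 1) :
    Xmat h0 M * (1 + M) = Jmat n R * Xmat h0 M := by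
  have hMn : ∀ j : Fin n, ∀ m, n ≤ m → (M ^ m) ⟨0, h0⟩ j = 0 := fun j m hm =>
    su_pow_vanish hM m ⟨0, h0⟩ j (by omega)
  ext i j
  have lhs : (Xmat h0 M * (1 + M)) i j
      = Xmat h0 M i j + (M ^ ((i : ℕ) + 1)) ⟨0, h0⟩ j := by
    rw [mul_add, mul_one, Matrix.add_apply]
    congr 1
  rw [lhs, Matrix.mul_apply]
  have split : ∀ k : Fin n, Jmat n R i k * Xmat h0 M k j
      = (if (i : ℕ) = (k : ℕ) then 1 else 0) * Xmat h0 M k j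
        + (if (i : ℕ) + 1 = (k : ℕ) then 1 else 0) * Xmat h0 M k j := by
    intro k; rw [← add_mul]; rfl
  rw [Finset.sum_congr rfl fun k _ => split k, Finset.sum_add_distrib]
  have s1 : (∑ k : Fin n, (if (i : ℕ) = (k : ℕ) then 1 else 0) * Xmat h0 M k j)
      = Xmat h0 M i j := by
    rw [Finset.sum_eq_single i]
    · simp
    · intro k _ hk
      rw [if_neg (fun e => hk (Fin.ext e.symm)), zero_mul]
    · intro habs; exact absurd (Finset.mem_univ _) habs
  have s2 : (∑ k : Fin n, (if (i : ℕ) + 1 = (k : ℕ) then 1 else 0) * Xmat h0 M k j)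
      = (M ^ ((i : ℕ) + 1)) ⟨0, h0⟩ j := by
    by_cases h : (i : ℕ) + 1 < n
    · rw [Finset.sum_eq_single (⟨(i : ℕ) + 1, h⟩ : Fin n)]
      · simp [Xmat]
      · intro k _ hk
        rw [if_neg (fun e => hk (Fin.ext e.symm)), zero_mul]
      · intro habs; exact absurd (Finset.mem_univ _) habs
    · rw [hMn j ((i : ℕ) + 1) (by omega)]
      apply Finset.sum_eq_zero
      intro k _
      rw [if_neg (by omega), zero_mul]
  rw [s1, s2]

lemma ut_mul_diag {P Q : Matrix (Fin n) (Fin n) R}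
    (hPd : ∀ i, P i i = 1) (hPl : ∀ i j, j < i → P i j = 0)
    (hQd : ∀ i, Q i i = 1) (hQl : ∀ i j, j < i → Q i j = 0) (i : Fin n) :
    (P * Q) i i = 1 := by
  rw [Matrix.mul_apply, Finset.sum_eq_single i]
  · rw [hPd, hQd, one_mul]
  · intro k _ hk
    rcases lt_or_gt_of_ne hk with h | h
    · rw [hPl i k h, zero_mul]
    · rw [hQl k i h, mul_zero]
  · intro habs; exact absurd (Finset.mem_univ _) habs

lemma ut_mul_low {P Q : Matrix (Fin n) (Fin n) R}
    (hPl : ∀ i j, j < i → P i j = 0) (hQl : ∀ i j, j < i → Q i j = 0)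
    (i j : Fin n) (hji : j < i) : (P * Q) i j = 0 := by
  rw [Matrix.mul_apply]
  apply Finset.sum_eq_zero
  intro k _
  by_cases h : k < i
  · rw [hPl i k h, zero_mul]
  · rw [hQl k j (lt_of_lt_of_le hji (le_of_not_gt h)), mul_zero]

end Stmt8Aux

open Stmt8Aux in
/-- Two `n×n` upper unitriangular matrices over a ring `R` whose first
superdiagonal entries are all equal to `1` are conjugate by a unitriangular
matrix. -/
theorem stmt8 {R : Type*} [Ring R] (n : ℕ) (A B : Matrix (Fin n) (Fin n) R)
    (hAdiag : ∀ i : Fin n, A i i = 1)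
    (hAlow : ∀ i j : Fin n, j < i → A i j = 0)
    (hAsup : ∀ (i : Fin n) (h : i.val + 1 < n), A i ⟨i.val + 1, h⟩ = 1)
    (hBdiag : ∀ i : Fin n, B i i = 1)
    (hBlow : ∀ i j : Fin n, j < i → B i j = 0)
    (hBsup : ∀ (i : Fin n) (h : i.val + 1 < n), B i ⟨i.val + 1, h⟩ = 1) :
    ∃ X : (Matrix (Fin n) (Fin n) R)ˣ,
      (∀ i : Fin n, X.val i i = 1) ∧
      (∀ i j : Fin n, j < i → X.val i j = 0) ∧
      X.val * A * (X⁻¹).val = B := by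
  rcases Nat.eq_zero_or_pos n with hn | h0
  · subst hn
    exact ⟨1, fun i => i.elim0, fun i j _ => i.elim0, by ext i j; exact i.elim0⟩
  -- set up
  have hsuA : SU (A - 1) := by
    intro i j hji
    rcases eq_or_lt_of_le hji with he | hlt
    · subst he
      simp [hAdiag]
    · rw [Matrix.sub_apply, hAlow i j hlt, Matrix.one_apply_ne (Fin.ne_of_gt hlt), sub_zero]
  have hsA : ∀ (i : Fin n) (h : (i : ℕ) + 1 < n), (A - 1) i ⟨(i : ℕ) + 1, h⟩ = 1 := by
    intro i h
    rw [Matrix.sub_apply, hAsup i h, Matrix.one_apply_ne (by simp [Fin.ext_iff]), sub_zero]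
  have hsuB : SU (B - 1) := by
    intro i j hji
    rcases eq_or_lt_of_le hji with he | hlt
    · subst he
      simp [hBdiag]
    · rw [Matrix.sub_apply, hBlow i j hlt, Matrix.one_apply_ne (Fin.ne_of_gt hlt), sub_zero]
  have hsB : ∀ (i : Fin n) (h : (i : ℕ) + 1 < n), (B - 1) i ⟨(i : ℕ) + 1, h⟩ = 1 := by
    intro i h
    rw [Matrix.sub_apply, hBsup i h, Matrix.one_apply_ne (by simp [Fin.ext_iff]), sub_zero]
  obtain ⟨uA, huA, hAid, hAil⟩ := exists_unit (Xmat_diag h0 hsuA hsA) (Xmat_low h0 hsuA)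
  obtain ⟨uB, huB, hBid, hBil⟩ := exists_unit (Xmat_diag h0 hsuB hsB) (Xmat_low h0 hsuB)
  have hA1 : A = 1 + (A - 1) := by abel
  have hB1 : B = 1 + (B - 1) := by abel
  have hkA : uA.val * A = Jmat n R * uA.val := by
    rw [huA]
    have hk := key h0 hsuA hsA
    rwa [← hA1] at hk
  have hkB : uB.val * B = Jmat n R * uB.val := by
    rw [huB]
    have hk := key h0 hsuB hsB
    rwa [← hB1] at hk
  have e1 : uA.val * A * (uA⁻¹).val = Jmat n R := by
    rw [hkA, mul_assoc, Units.mul_inv, mul_one]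
  have e2 : (uB⁻¹).val * Jmat n R * uB.val = B := by
    rw [mul_assoc, ← hkB, ← mul_assoc, Units.inv_mul, one_mul]
  refine ⟨uB⁻¹ * uA, ?_, ?_, ?_⟩
  · intro i
    rw [Units.val_mul]
    exact ut_mul_diag hBid hBil (huA ▸ Xmat_diag h0 hsuA hsA) (huA ▸ Xmat_low h0 hsuA) i
  · intro i j hji
    rw [Units.val_mul]
    exact ut_mul_low hBil (huA ▸ Xmat_low h0 hsuA) i j hji
  · have : ((uB⁻¹ * uA)⁻¹ : (Matrix (Fin n) (Fin n) R)ˣ) = uA⁻¹ * uB := by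
      rw [mul_inv_rev, inv_inv]
    rw [this, Units.val_mul, Units.val_mul]
    calc (uB⁻¹).val * uA.val * A * ((uA⁻¹).val * uB.val)
        = (uB⁻¹).val * (uA.val * A * (uA⁻¹).val) * uB.val := by
          simp only [mul_assoc]
      _ = B := by rw [e1, e2]
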